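/- arXiv:1411.5117 — 2 statements merged into one kernel-verified Lean document; each statement's English description precedes it below -/
import Mathlib

section
/- Let L > 0, let μ : [0, L] → ℝ be continuous with μ(t) ≤ 0 for all t ∈ [0, L], and let s : [0, L] → ℝ be twice continuously differentiable with s''(t) + μ(t) s(t) = 0 on [0, L], s(0) = 0, and s'(0) = 1. Then s'(t) ≥ 1 and s(t) ≥ t for all t ∈ [0, L]; in particular s(t) > 0 for all t ∈ (0, L]. -/
open Set

lemma jacobi_mono_aux {a b : ℝ} {f f' : ℝ → ℝ}
    (hf : ∀ x ∈ Icc a b, HasDerivWithinAt f (f' x) (Icc a b) x)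
    (h0 : ∀ x ∈ Icc a b, 0 ≤ f' x) : MonotoneOn f (Icc a b) := by
  refine monotoneOn_of_hasDerivWithinAt_nonneg (convex_Icc a b)
    (fun x hx => (hf x hx).continuousWithinAt)
    (f' := f') (fun x hx => ?_) (fun x hx => h0 x (interior_subset hx))
  exact (hf x (interior_subset hx)).mono interior_subset

theorem jacobi_comparison_nonpos_curvature (L : ℝ) (hL : 0 < L)
    (μ s s' s'' : ℝ → ℝ)
    (hμc : ContinuousOn μ (Icc 0 L))
    (hμ : ∀ t ∈ Icc 0 L, μ t ≤ 0)
    (hs : ∀ t ∈ Icc 0 L, HasDerivWithinAt s (s' t) (Icc 0 L) t)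
    (hs' : ∀ t ∈ Icc 0 L, HasDerivWithinAt s' (s'' t) (Icc 0 L) t)
    (hs''c : ContinuousOn s'' (Icc 0 L))
    (hode : ∀ t ∈ Icc 0 L, s'' t + μ t * s t = 0)
    (h0 : s 0 = 0) (h1 : s' 0 = 1) :
    (∀ t ∈ Icc 0 L, 1 ≤ s' t ∧ t ≤ s t) ∧ (∀ t ∈ Ioc 0 L, 0 < s t) := by
  have hscont : ContinuousOn s (Icc 0 L) := fun x hx => (hs x hx).continuousWithinAt
  have hs'cont : ContinuousOn s' (Icc 0 L) := fun x hx => (hs' x hx).continuousWithinAt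
  -- key: if s ≥ 0 on [0,c], then s' ≥ 1 and s ≥ id on [0,c]
  have key : ∀ c ∈ Icc 0 L, (∀ u ∈ Icc 0 c, 0 ≤ s u) →
      ∀ u ∈ Icc 0 c, 1 ≤ s' u ∧ u ≤ s u := by
    intro c hc hpos
    have hsub : Icc 0 c ⊆ Icc 0 L := Icc_subset_Icc le_rfl hc.2
    have hmono : MonotoneOn s' (Icc 0 c) := by
      refine jacobi_mono_aux (f' := s'') (fun x hx => (hs' x (hsub hx)).mono hsub) ?_
      intro x hx
      have h₁ := hode x (hsub hx)
      have h₂ := hμ x (hsub hx)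
      have h₃ := hpos x hx
      nlinarith
    have h0c : (0 : ℝ) ∈ Icc (0:ℝ) c := ⟨le_rfl, hc.1⟩
    have hge1 : ∀ u ∈ Icc 0 c, 1 ≤ s' u := by
      intro u hu
      have := hmono h0c hu hu.1
      rwa [h1] at this
    intro u hu
    refine ⟨hge1 u hu, ?_⟩
    have hmono2 : MonotoneOn (fun x => s x - x) (Icc 0 c) := by
      refine jacobi_mono_aux (f' := fun x => s' x - 1) ?_ ?_
      · intro x hx
        exact ((hs x (hsub hx)).mono hsub).sub (hasDerivWithinAt_id x _)
      · intro x hx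
        have := hge1 x hx
        show 0 ≤ s' x - 1
        linarith
    have := hmono2 h0c hu hu.1
    simp only [h0] at this
    linarith
  -- the set where s stays nonnegative
  set A : Set ℝ := {t | t ∈ Icc 0 L ∧ ∀ u ∈ Icc 0 t, 0 ≤ s u} with hA
  have h0A : (0 : ℝ) ∈ A := by
    refine ⟨⟨le_rfl, hL.le⟩, fun u hu => ?_⟩
    have : u = 0 := le_antisymm hu.2 hu.1
    rw [this, h0]
  have hAne : A.Nonempty := ⟨0, h0A⟩
  have hAbdd : BddAbove A := ⟨L, fun t ht => ht.1.2⟩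
  set c := sSup A with hcdef
  have hcL : c ∈ Icc 0 L := ⟨le_csSup hAbdd h0A, csSup_le hAne fun t ht => ht.1.2⟩
  have hIco : ∀ u ∈ Ico 0 c, 0 ≤ s u := by
    intro u hu
    obtain ⟨t, htA, hut⟩ := exists_lt_of_lt_csSup hAne hu.2
    exact htA.2 u ⟨hu.1, hut.le⟩
  have hsc : 0 ≤ s c := by
    rcases eq_or_lt_of_le hcL.1 with h | h
    · rw [← h, h0]
    · have hcw : ContinuousWithinAt s (Ico 0 c) c :=
        (hscont c hcL).mono (Ico_subset_Icc_self.trans (Icc_subset_Icc le_rfl hcL.2))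
      have hne : (nhdsWithin c (Ico 0 c)).NeBot := by
        rw [← mem_closure_iff_nhdsWithin_neBot, closure_Ico h.ne]
        exact ⟨hcL.1, le_rfl⟩
      refine ge_of_tendsto hcw ?_
      filter_upwards [self_mem_nhdsWithin] with u hu using hIco u hu
  have hcA : c ∈ A := by
    refine ⟨hcL, fun u hu => ?_⟩
    rcases lt_or_eq_of_le hu.2 with h | h
    · exact hIco u ⟨hu.1, h⟩
    · rw [h]; exact hsc
  -- show c = L
  have hcLeq : c = L := by
    by_contra hne
    have hclt : c < L := lt_of_le_of_ne hcL.2 hne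
    have hs'c : 1 ≤ s' c := (key c hcL hcA.2 c ⟨hcL.1, le_rfl⟩).1
    have hev : ∀ᶠ x in nhdsWithin c (Icc 0 L), 0 < s' x :=
      (hs'cont c hcL).eventually (eventually_gt_nhds (by linarith))
    rw [Filter.eventually_iff, Metric.mem_nhdsWithin_iff] at hev
    obtain ⟨ε, hε, hball⟩ := hev
    set d := min L (c + ε / 2) with hd
    have hcd : c < d := lt_min hclt (by linarith)
    have hdL : d ≤ L := min_le_left _ _
    have hsubcd : Icc c d ⊆ Icc 0 L := Icc_subset_Icc hcL.1 hdL
    have hmono : MonotoneOn s (Icc c d) := by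
      refine jacobi_mono_aux (f' := s') (fun x hx => (hs x (hsubcd hx)).mono hsubcd) ?_
      intro x hx
      have hxball : x ∈ Metric.ball c ε := by
        rw [Metric.mem_ball, Real.dist_eq, abs_of_nonneg (by linarith [hx.1])]
        have := hx.2
        have : x ≤ c + ε / 2 := le_trans hx.2 (min_le_right _ _)
        linarith
      exact le_of_lt (hball ⟨hxball, hsubcd hx⟩)
    have hdA : d ∈ A := by
      refine ⟨⟨le_trans hcL.1 hcd.le, hdL⟩, fun u hu => ?_⟩
      rcases le_or_gt u c with h | h
      · exact hcA.2 u ⟨hu.1, h⟩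
      · calc (0:ℝ) ≤ s c := hsc
          _ ≤ s u := hmono ⟨le_rfl, hcd.le⟩ ⟨h.le, hu.2⟩ h.le
    have := le_csSup hAbdd hdA
    rw [← hcdef] at this
    linarith
  have hposL : ∀ u ∈ Icc 0 L, 0 ≤ s u := by rw [← hcLeq]; exact hcA.2
  have hmain := key L ⟨hL.le, le_rfl⟩ hposL
  refine ⟨hmain, fun t ht => ?_⟩
  have := (hmain t ⟨ht.1.le, ht.2⟩).2
  linarith [ht.1]
end

section
/- Let a ∈ ℝ and let q : [a, a+2] → ℝ be differentiable with q(t) > 0 and q'(t) ≥ 1/2 − q(t)² for all t ∈ [a, a+2]. Then q(a+2) ≥ 1/2. -/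
open Set

theorem riccati_inequality_lower_bound (a : ℝ) (q q' : ℝ → ℝ)
    (hq : ∀ t ∈ Icc a (a + 2), HasDerivWithinAt q (q' t) (Icc a (a + 2)) t)
    (hpos : ∀ t ∈ Icc a (a + 2), 0 < q t)
    (hineq : ∀ t ∈ Icc a (a + 2), 1 / 2 - q t ^ 2 ≤ q' t) :
    1 / 2 ≤ q (a + 2) := by
  by_contra h2
  push_neg at h2
  have hcont : ContinuousOn q (Icc a (a + 2)) :=
    fun t ht => (hq t ht).continuousWithinAt
  have haa : a ≤ a + 2 := by linarith
  have hmem2 : (a + 2) ∈ Icc a (a + 2) := ⟨haa, le_refl _⟩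
  -- S : set of points where q ≥ 1/2, together with a
  set S : Set ℝ := insert a {t ∈ Icc a (a + 2) | 1 / 2 ≤ q t} with hS
  have hSne : S.Nonempty := ⟨a, mem_insert _ _⟩
  have hSbdd : BddAbove S := by
    apply BddAbove.insert
    exact (bddAbove_Icc (a := a) (b := a + 2)).mono (fun t ht => ht.1)
  have hSclosed : IsClosed S := by
    have : {t ∈ Icc a (a + 2) | 1 / 2 ≤ q t}
        = Icc a (a + 2) ∩ {t ∈ Icc a (a + 2) | 1 / 2 ≤ q t} := by
      ext t; simp only [mem_inter_iff, mem_setOf_eq]; tauto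
    rw [hS, this, Set.insert_eq]
    exact isClosed_singleton.union (IsClosed.inter isClosed_Icc
      (isClosed_Icc.isClosed_le continuousOn_const hcont))
  set s := sSup S with hs
  have hsS : s ∈ S := hSclosed.csSup_mem hSne hSbdd
  have hsIcc : s ∈ Icc a (a + 2) := by
    rcases hsS with h | h
    · rw [h]; exact ⟨le_refl _, haa⟩
    · exact h.1
  have hslt : s < a + 2 := by
    rcases lt_or_eq_of_le hsIcc.2 with h | h
    · exact h
    · exfalso
      rcases hsS with hh | hh
      · linarith
      · rw [h] at hh; linarith [hh.2]
  -- q < 1/2 on (s, a+2]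
  have hqlt : ∀ t, s < t → t ≤ a + 2 → q t < 1 / 2 := by
    intro t hst hta
    by_contra hc
    push_neg at hc
    have htS : t ∈ S := Or.inr ⟨⟨le_trans hsIcc.1 hst.le, hta⟩, hc⟩
    exact absurd (le_csSup hSbdd htS) (not_le.mpr hst)
  -- the function g t = q t - t/4 is monotone on [s, a+2]
  have hsub : Icc s (a + 2) ⊆ Icc a (a + 2) :=
    Icc_subset_Icc hsIcc.1 le_rfl
  have hmono : MonotoneOn (fun t => q t - t / 4) (Icc s (a + 2)) := by
    apply monotoneOn_of_hasDerivWithinAt_nonneg (f' := fun t => q' t - 1 / 4)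
      (convex_Icc s (a + 2))
    · exact (hcont.mono hsub).sub (continuousOn_id.div_const 4)
    · intro x hx
      rw [interior_Icc] at hx ⊢
      have hxI : x ∈ Icc a (a + 2) := hsub (Ioo_subset_Icc_self hx)
      exact HasDerivWithinAt.sub
        (((hq x hxI).mono (fun t ht => hsub (Ioo_subset_Icc_self ht))))
        ((hasDerivWithinAt_id x _).div_const 4)
    · intro x hx
      rw [interior_Icc] at hx
      have hxI : x ∈ Icc a (a + 2) := hsub (Ioo_subset_Icc_self hx)
      have h1 : q x < 1 / 2 := hqlt x hx.1 hx.2.le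
      have h0 : 0 < q x := hpos x hxI
      have : q x ^ 2 < 1 / 4 := by nlinarith
      have := hineq x hxI
      linarith
  have hkey := hmono (left_mem_Icc.mpr hslt.le) (right_mem_Icc.mpr hslt.le) hslt.le
  simp only at hkey
  -- case split on s
  rcases hsS with h | h
  · -- s = a, q a > 0
    have hqa : 0 < q a := hpos a ⟨le_refl _, haa⟩
    rw [h] at hkey
    linarith
  · -- q s ≥ 1/2
    have := h.2
    linarith
end
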